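/- (Theorem 5, part 1) Let L ⊆ [n]³ be a PLS set and let S be an independent set of G_L that is (p,n²)-maximal for every p ∈ {0, 1}. Then S is a 1/2-approximate solution of the PLSE instance L: for every independent set S* of G_L, 2·|S| ≥ |S*|. -/

import Mathlib

/-- A PLS set: any two distinct triples have Hamming distance at least 2. -/
def IsPLS {n : ℕ} (T : Set (Fin 3 → Fin n)) : Prop :=
  ∀ v ∈ T, ∀ w ∈ T, v ≠ w → 2 ≤ hammingDist v w

/-- The node set `V_L = [n]³ \ (L ∪ N*(L))`. -/
def VL {n : ℕ} (L : Set (Fin 3 → Fin n)) : Set (Fin 3 → Fin n) :=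
  {v | v ∉ L ∧ ∀ w ∈ L, hammingDist v w ≠ 1}

/-- The graph `GraphL`: distinct nodes of `V_L` are adjacent iff their Hamming distance is 1. -/
def GraphL {n : ℕ} (L : Set (Fin 3 → Fin n)) : SimpleGraph (Fin 3 → Fin n) where
  Adj v w := v ∈ VL L ∧ w ∈ VL L ∧ hammingDist v w = 1
  symm := by
    refine ⟨?_⟩
    rintro v w ⟨hv, hw, h⟩
    exact ⟨hw, hv, by rwa [hammingDist_comm]⟩
  loopless := by
    refine ⟨?_⟩
    rintro v ⟨_, _, h⟩
    simp [hammingDist_self] at h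

/-- An independent set of a simple graph. -/
def IsIndep {V : Type*} (G : SimpleGraph V) (S : Set V) : Prop :=
  ∀ v ∈ S, ∀ w ∈ S, ¬ G.Adj v w

/-- The grid line `ℓ_{v,d}`: all triples agreeing with `v` in both coordinates other than `d`. -/
def gridLine {n : ℕ} (v : Fin 3 → Fin n) (d : Fin 3) : Set (Fin 3 → Fin n) :=
  {w | ∀ e, e ≠ d → w e = v e}

lemma ham_one {n : ℕ} {v w : Fin 3 → Fin n} (h : hammingDist v w = 1) :
    ∃ d, v d ≠ w d ∧ ∀ e, e ≠ d → v e = w e := by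
  unfold hammingDist at h
  rw [Finset.card_eq_one] at h
  obtain ⟨d, hd⟩ := h
  refine ⟨d, ?_, ?_⟩
  · have : d ∈ ({d} : Finset (Fin 3)) := Finset.mem_singleton_self d
    rw [← hd] at this
    simpa using this
  · intro e he
    by_contra hne
    have : e ∈ ({d} : Finset (Fin 3)) := by
      rw [← hd]; simpa using hne
    simp at this
    exact he this

lemma ham_one_of {n : ℕ} {v w : Fin 3 → Fin n} (d : Fin 3) (hne : v ≠ w)
    (h : ∀ e, e ≠ d → v e = w e) : hammingDist v w = 1 := by
  have hvd : v d ≠ w d := by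
    intro hvd
    apply hne
    funext e
    by_cases hed : e = d
    · rw [hed]; exact hvd
    · exact h e hed
  unfold hammingDist
  rw [Finset.card_eq_one]
  refine ⟨d, Finset.eq_singleton_iff_unique_mem.2 ⟨by simpa using hvd, ?_⟩⟩
  intro x hx
  simp only [Finset.mem_filter, Finset.mem_univ, true_and] at hx
  by_contra hxd
  exact hx (h x hxd)

/-- Theorem 5, part 1: a 1-maximal solution (i.e. `(p,n²)`-maximal for
every `p ∈ {0,1}`) is a 1/2-approximate solution of the PLSE instance `L`. -/
theorem one_maximal_half_approx (n : ℕ) (hn : 2 ≤ n)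
    (L : Set (Fin 3 → Fin n)) (hL : IsPLS L)
    (S : Set (Fin 3 → Fin n)) (hsub : S ⊆ VL L) (hind : IsIndep (GraphL L) S)
    (hmax : ∀ p : ℕ, p ≤ 1 → ∀ R ⊆ S, R.ncard = p → ∀ I ⊆ VL L \ S,
      IsIndep (GraphL L) ((S \ R) ∪ I) → ((S \ R) ∪ I).ncard ≤ S.ncard)
    (Sstar : Set (Fin 3 → Fin n)) (hstar : Sstar ⊆ VL L)
    (hindstar : IsIndep (GraphL L) Sstar) :
    Sstar.ncard ≤ 2 * S.ncard := by
  classical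
  have hadj_def : ∀ v w : Fin 3 → Fin n, (GraphL L).Adj v w ↔
      (v ∈ VL L ∧ w ∈ VL L ∧ hammingDist v w = 1) := fun _ _ => Iff.rfl
  have hfinS : S.Finite := Set.toFinite S
  have hfinT : Sstar.Finite := Set.toFinite Sstar
  set S' : Finset (Fin 3 → Fin n) := hfinS.toFinset with hS'def
  set T' : Finset (Fin 3 → Fin n) := hfinT.toFinset with hT'def
  have hmemS : ∀ x, x ∈ S' ↔ x ∈ S := fun x => hfinS.mem_toFinset
  have hmemT : ∀ x, x ∈ T' ↔ x ∈ Sstar := fun x => hfinT.mem_toFinset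
  -- 0-maximality: every v ∈ Sstar \ S has a neighbor in S
  have hnbr : ∀ v ∈ Sstar, v ∉ S → ∃ s ∈ S, (GraphL L).Adj v s := by
    intro v hv hvS
    by_contra h
    push_neg at h
    have hVL : v ∈ VL L := hstar hv
    have hindep : IsIndep (GraphL L) ((S \ ∅) ∪ {v}) := by
      rw [Set.diff_empty]
      intro a ha b hb hab
      simp only [Set.mem_union, Set.mem_singleton_iff] at ha hb
      rcases ha with ha | rfl <;> rcases hb with hb | rfl
      · exact hind a ha b hb hab
      · exact h a ha ((GraphL L).symm.symm _ _ hab)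
      · exact h b hb hab
      · exact (GraphL L).loopless.irrefl _ hab
    have hle := hmax 0 (by norm_num) ∅ (Set.empty_subset S) (by simp) {v}
      (by intro x hx; rw [Set.mem_singleton_iff] at hx; subst hx; exact ⟨hVL, hvS⟩) hindep
    rw [Set.diff_empty, Set.union_singleton, Set.ncard_insert_of_notMem hvS hfinS] at hle
    omega
  -- 1-maximality: for each s, at most one private neighbor in Sstar \ S
  have huniq : ∀ s ∈ S, ∀ v w : Fin 3 → Fin n, v ∈ Sstar → v ∉ S → w ∈ Sstar → w ∉ S →
      (∀ t ∈ S, (GraphL L).Adj v t → t = s) → (∀ t ∈ S, (GraphL L).Adj w t → t = s) →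
      v = w := by
    intro s hs v w hv hvS hw hwS hv1 hw1
    by_contra hvw
    have hI : ({v, w} : Set (Fin 3 → Fin n)) ⊆ VL L \ S := by
      intro x hx
      rcases hx with rfl | hx
      · exact ⟨hstar hv, hvS⟩
      · rw [Set.mem_singleton_iff] at hx; subst hx; exact ⟨hstar hw, hwS⟩
    have hmemvw : ∀ x, x ∈ ({v, w} : Set (Fin 3 → Fin n)) → x = v ∨ x = w := by
      intro x hx
      rcases hx with rfl | hx
      · exact Or.inl rfl
      · exact Or.inr hx
    have hind2 : IsIndep (GraphL L) ((S \ {s}) ∪ {v, w}) := by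
      intro a ha b hb hab
      have key : ∀ x ∈ (S \ {s} : Set _), ∀ y, y = v ∨ y = w → ¬(GraphL L).Adj x y := by
        intro x hx y hy hxy
        rcases hy with rfl | rfl
        · exact hx.2 (hv1 x hx.1 ((GraphL L).symm.symm _ _ hxy))
        · exact hx.2 (hw1 x hx.1 ((GraphL L).symm.symm _ _ hxy))
      rcases (Set.mem_union _ _ _).1 ha with ha | ha
      · rcases (Set.mem_union _ _ _).1 hb with hb | hb
        · exact hind a ha.1 b hb.1 hab
        · exact key a ha b (hmemvw b hb) hab
      · rcases (Set.mem_union _ _ _).1 hb with hb | hb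
        · exact key b hb a (hmemvw a ha) ((GraphL L).symm.symm _ _ hab)
        · have haS : a ∈ Sstar := by rcases hmemvw a ha with rfl | rfl; exacts [hv, hw]
          have hbS : b ∈ Sstar := by rcases hmemvw b hb with rfl | rfl; exacts [hv, hw]
          exact hindstar a haS b hbS hab
    have hle := hmax 1 le_rfl {s} (by simpa using hs) (by simp) {v, w} hI hind2
    have hdisj : Disjoint (S \ {s}) ({v, w} : Set (Fin 3 → Fin n)) := by
      rw [Set.disjoint_right]
      intro x hx
      rcases hmemvw x hx with rfl | rfl
      · exact fun h => hvS h.1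
      · exact fun h => hwS h.1
    rw [Set.ncard_union_eq hdisj (hfinS.diff (t := {s})) ((Set.finite_singleton w).insert v),
      Set.ncard_diff_singleton_of_mem hs, Set.ncard_pair hvw] at hle
    have hpos : 0 < S.ncard := (Set.ncard_pos hfinS).2 ⟨s, hs⟩
    omega
  -- the charging function
  set Ns : (Fin 3 → Fin n) → Finset (Fin 3 → Fin n) :=
    fun v => S'.filter (fun s => (GraphL L).Adj v s) with hNsdef
  set c : (Fin 3 → Fin n) → (Fin 3 → Fin n) → ℕ := fun v s =>
    if v ∈ S then (if s = v then 2 else 0)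
    else if (Ns v).card = 1 then (if s ∈ Ns v then 2 else 0)
    else (if s ∈ Ns v then 1 else 0) with hcdef
  -- each v in Sstar gives out total charge ≥ 2
  have hA : ∀ v ∈ T', 2 ≤ ∑ s ∈ S', c v s := by
    intro v hv
    have hvT : v ∈ Sstar := (hmemT v).1 hv
    by_cases hvS : v ∈ S
    · have hvS' : v ∈ S' := (hmemS v).2 hvS
      simp only [hcdef, if_pos hvS]
      rw [Finset.sum_ite_eq' S' v (fun _ => 2), if_pos hvS']
    · obtain ⟨s, hs, hadj⟩ := hnbr v hvT hvS
      have hsNs : s ∈ Ns v := Finset.mem_filter.2 ⟨(hmemS s).2 hs, hadj⟩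
      have hsub' : Ns v ⊆ S' := Finset.filter_subset _ _
      have hcard1 : 1 ≤ (Ns v).card := Finset.card_pos.2 ⟨s, hsNs⟩
      by_cases h1 : (Ns v).card = 1
      · simp only [hcdef, if_neg hvS, if_pos h1]
        rw [Finset.sum_ite_mem, Finset.inter_eq_right.2 hsub', Finset.sum_const, h1]
        simp
      · simp only [hcdef, if_neg hvS, if_neg h1]
        rw [Finset.sum_ite_mem, Finset.inter_eq_right.2 hsub', Finset.sum_const, smul_eq_mul,
          mul_one]
        omega
  -- each s in S receives total charge ≤ 4
  have hB : ∀ s ∈ S', ∑ v ∈ T', c v s ≤ 4 := by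
    intro s hs'
    have hsS : s ∈ S := (hmemS s).1 hs'
    by_cases hsT : s ∈ Sstar
    · -- s itself is in Sstar: no Sstar-neighbors, only s contributes
      have hzero : ∀ v ∈ T', v ≠ s → c v s = 0 := by
        intro v hv hvs
        have hvT : v ∈ Sstar := (hmemT v).1 hv
        have hnadj : ¬(GraphL L).Adj v s := hindstar v hvT s hsT
        have hsNs : s ∉ Ns v := fun h => hnadj (Finset.mem_filter.1 h).2
        by_cases hvS : v ∈ S
        · simp [hcdef, hvS, Ne.symm hvs]
        · simp [hcdef, hvS, hsNs]
      rw [Finset.sum_eq_single_of_mem s ((hmemT s).2 hsT) hzero]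
      norm_num [hcdef, hsS]
    · -- s not in Sstar
      set A := T'.filter (fun v => (GraphL L).Adj v s) with hAdef
      have hzero : ∀ v ∈ T', v ∉ A → c v s = 0 := by
        intro v hv hvA
        have hnadj : ¬(GraphL L).Adj v s := fun h => hvA (Finset.mem_filter.2 ⟨hv, h⟩)
        have hsNs : s ∉ Ns v := fun h => hnadj (Finset.mem_filter.1 h).2
        have hvs : s ≠ v := by rintro rfl; exact hsT ((hmemT s).1 hv)
        by_cases hvS : v ∈ S
        · simp [hcdef, hvS, hvs]
        · simp [hcdef, hvS, hsNs]
      rw [← Finset.sum_subset (Finset.filter_subset _ _) hzero]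
      have hAmem : ∀ v ∈ A, v ∈ Sstar ∧ (GraphL L).Adj v s := by
        intro v hv
        exact ⟨(hmemT v).1 (Finset.mem_filter.1 hv).1, (Finset.mem_filter.1 hv).2⟩
      -- |A| ≤ 3
      have hcardA : A.card ≤ 3 := by
        set f : (Fin 3 → Fin n) → Fin 3 := fun v =>
          if h : hammingDist v s = 1 then (ham_one h).choose else 0 with hfdef
        have hinj : Set.InjOn f A := by
          intro v hv w hw hfvw
          by_contra hvw
          have hv1 : hammingDist v s = 1 := ((hadj_def v s).1 (hAmem v hv).2).2.2
          have hw1 : hammingDist w s = 1 := ((hadj_def w s).1 (hAmem w hw).2).2.2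
          have hfv := (ham_one hv1).choose_spec
          have hfw := (ham_one hw1).choose_spec
          simp only [hfdef, dif_pos hv1, dif_pos hw1] at hfvw
          have hagree : ∀ e, e ≠ (ham_one hv1).choose → v e = w e := by
            intro e he
            refine (hfv.2 e he).trans (hfw.2 e ?_).symm
            rw [← hfvw]
            exact he
          have hdvw : hammingDist v w = 1 := ham_one_of _ hvw hagree
          have hadj2 : (GraphL L).Adj v w :=
            ⟨hstar (hAmem v hv).1, hstar (hAmem w hw).1, hdvw⟩
          exact hindstar v (hAmem v hv).1 w (hAmem w hw).1 hadj2
        calc A.card ≤ (Finset.univ : Finset (Fin 3)).card :=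
              Finset.card_le_card_of_injOn f (fun _ _ => Finset.mem_univ _) hinj
          _ = 3 := by simp
      -- the private neighbors: at most one
      set U := A.filter (fun v => v ∉ S ∧ (Ns v).card = 1) with hUdef
      have hUcard : U.card ≤ 1 := by
        rw [Finset.card_le_one]
        intro v hv w hw
        obtain ⟨hvA, hvS, hv1⟩ :
            v ∈ A ∧ v ∉ S ∧ (Ns v).card = 1 := by
          have := Finset.mem_filter.1 hv; exact ⟨this.1, this.2.1, this.2.2⟩
        obtain ⟨hwA, hwS, hw1⟩ :
            w ∈ A ∧ w ∉ S ∧ (Ns w).card = 1 := by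
          have := Finset.mem_filter.1 hw; exact ⟨this.1, this.2.1, this.2.2⟩
        have hNseq : ∀ u : Fin 3 → Fin n, u ∈ A → (Ns u).card = 1 →
            ∀ t ∈ S, (GraphL L).Adj u t → t = s := by
          intro u hu hu1 t ht hadj
          have hsin : s ∈ Ns u := Finset.mem_filter.2 ⟨hs', (Finset.mem_filter.1 hu).2⟩
          have htin : t ∈ Ns u := Finset.mem_filter.2 ⟨(hmemS t).2 ht, hadj⟩
          obtain ⟨a, ha⟩ := Finset.card_eq_one.1 hu1
          rw [ha, Finset.mem_singleton] at hsin htin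
          rw [htin, hsin]
        exact huniq s hsS v w ((hmemT v).1 (Finset.mem_filter.1 hvA).1) hvS
          ((hmemT w).1 (Finset.mem_filter.1 hwA).1) hwS
          (hNseq v hvA hv1) (hNseq w hwA hw1)
      have hbound : ∀ v ∈ A, c v s ≤ 1 + (if v ∈ U then 1 else 0) := by
        intro v hv
        have hadj : (GraphL L).Adj v s := (Finset.mem_filter.1 hv).2
        have hsNs : s ∈ Ns v := Finset.mem_filter.2 ⟨hs', hadj⟩
        by_cases hvS : v ∈ S
        · have hsv : ¬(s = v) := by rintro rfl; exact (GraphL L).loopless.irrefl s hadj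
          simp [hcdef, hvS, hsv]
        · by_cases h1 : (Ns v).card = 1
          · have hvU : v ∈ U := Finset.mem_filter.2 ⟨hv, hvS, h1⟩
            simp [hcdef, hvS, h1, hsNs, hvU]
          · have hvU : v ∉ U := fun h => h1 (Finset.mem_filter.1 h).2.2
            simp [hcdef, hvS, h1, hsNs]
      calc ∑ v ∈ A, c v s ≤ ∑ v ∈ A, (1 + if v ∈ U then 1 else 0) :=
            Finset.sum_le_sum hbound
        _ = A.card + ∑ v ∈ A, (if v ∈ U then 1 else 0) := by
            rw [Finset.sum_add_distrib, Finset.sum_const, smul_eq_mul, mul_one]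
        _ ≤ A.card + U.card := by
            have : ∑ v ∈ A, (if v ∈ U then 1 else 0) ≤ U.card := by
              rw [Finset.sum_ite_mem, Finset.sum_const, smul_eq_mul, mul_one]
              exact Finset.card_le_card (Finset.inter_subset_right)
            omega
        _ ≤ 4 := by omega
  have key : 2 * T'.card ≤ 4 * S'.card := by
    calc 2 * T'.card = ∑ _v ∈ T', 2 := by rw [Finset.sum_const, smul_eq_mul]; ring
      _ ≤ ∑ v ∈ T', ∑ s ∈ S', c v s := Finset.sum_le_sum hA
      _ = ∑ s ∈ S', ∑ v ∈ T', c v s := Finset.sum_comm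
      _ ≤ ∑ _s ∈ S', 4 := Finset.sum_le_sum hB
      _ = 4 * S'.card := by rw [Finset.sum_const, smul_eq_mul]; ring
  have h1 : Sstar.ncard = T'.card := by rw [hT'def]; exact Set.ncard_eq_toFinset_card _ hfinT
  have h2 : S.ncard = S'.card := by rw [hS'def]; exact Set.ncard_eq_toFinset_card _ hfinS
  omega
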